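/- Every weight-n module over the Heisenberg-type group G of type (d₁,…,d_p) decomposes as a direct sum of irreducible weight-n G-modules. -/

import Mathlib

abbrev ThetaK1 (p : ℕ) (d : Fin p → ℕ) : Type := ∀ i : Fin p, Multiplicative (ZMod (d i))

abbrev ThetaK2 (k : Type) [Field k] (p : ℕ) (d : Fin p → ℕ) : Type := ThetaK1 p d →* kˣ

def Heis (k : Type) [Field k] (p : ℕ) (d : Fin p → ℕ) : Type :=
  kˣ × ThetaK1 p d × ThetaK2 k p d

namespace Heis

variable {k : Type} [Field k] {p : ℕ} {d : Fin p → ℕ}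

def mk (α : kˣ) (x : ThetaK1 p d) (χ : ThetaK2 k p d) : Heis k p d := (α, x, χ)

instance : Mul (Heis k p d) :=
  ⟨fun a b => (a.1 * b.1 * b.2.2 a.2.1, a.2.1 * b.2.1, a.2.2 * b.2.2)⟩

instance : One (Heis k p d) := ⟨((1 : kˣ), 1, 1)⟩

instance : Inv (Heis k p d) := ⟨fun a => (a.1⁻¹ * a.2.2 a.2.1, a.2.1⁻¹, a.2.2⁻¹)⟩

theorem mul_def (a b : Heis k p d) :
    a * b = (a.1 * b.1 * b.2.2 a.2.1, a.2.1 * b.2.1, a.2.2 * b.2.2) := rfl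

theorem one_def : (1 : Heis k p d) = ((1 : kˣ), 1, 1) := rfl

theorem inv_def (a : Heis k p d) :
    a⁻¹ = (a.1⁻¹ * a.2.2 a.2.1, a.2.1⁻¹, a.2.2⁻¹) := rfl

theorem mul_assoc' (a b c : Heis k p d) : a * b * c = a * (b * c) := by
  obtain ⟨α, x, χ⟩ := a
  obtain ⟨β, y, ψ⟩ := b
  obtain ⟨γ, z, ω⟩ := c
  refine Prod.ext ?_ (Prod.ext ?_ ?_)
  · show α * β * ψ x * γ * (ω (x * y)) = α * (β * γ * ω y) * ((ψ * ω) x)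
    simp [map_mul, MonoidHom.mul_apply, mul_assoc, mul_comm, mul_left_comm]
  · exact mul_assoc x y z
  · exact mul_assoc χ ψ ω

theorem one_mul' (a : Heis k p d) : 1 * a = a := by
  obtain ⟨α, x, χ⟩ := a
  refine Prod.ext ?_ (Prod.ext ?_ ?_)
  · show 1 * α * χ 1 = α
    simp
  · exact one_mul x
  · exact one_mul χ

theorem mul_one' (a : Heis k p d) : a * 1 = a := by
  obtain ⟨α, x, χ⟩ := a
  refine Prod.ext ?_ (Prod.ext ?_ ?_)
  · show α * 1 * (1 : ThetaK2 k p d) x = α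
    simp
  · exact mul_one x
  · exact mul_one χ

theorem inv_mul_cancel' (a : Heis k p d) : a⁻¹ * a = 1 := by
  obtain ⟨α, x, χ⟩ := a
  refine Prod.ext ?_ (Prod.ext ?_ ?_)
  · show α⁻¹ * χ x * α * χ (x⁻¹) = 1
    simp [map_inv, mul_comm, mul_left_comm]
  · exact inv_mul_cancel x
  · exact inv_mul_cancel χ

instance : Group (Heis k p d) where
  mul_assoc := mul_assoc'
  one_mul := one_mul'
  mul_one := mul_one'
  inv_mul_cancel := inv_mul_cancel'

/-- The multiplication rule of the Heisenberg-type group. -/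
theorem mk_mul (α β : kˣ) (x y : ThetaK1 p d) (χ ψ : ThetaK2 k p d) :
    mk α x χ * mk β y ψ = mk (α * β * ψ x) (x * y) (χ * ψ) := rfl

end Heis

section Reps

variable {k : Type} [Field k]

/-- A subspace stable under a representation. -/
def RepStable {G V : Type} [Group G] [AddCommGroup V] [Module k V]
    (ρ : G →* (V →ₗ[k] V)ˣ) (W : Submodule k V) : Prop :=
  ∀ (g : G), ∀ w ∈ W, (ρ g : V →ₗ[k] V) w ∈ W

/-- Irreducibility: nonzero and no nontrivial stable subspace. -/
def RepIrred {G V : Type} [Group G] [AddCommGroup V] [Module k V]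
    (ρ : G →* (V →ₗ[k] V)ˣ) : Prop :=
  (∃ v : V, v ≠ 0) ∧
  ∀ W : Submodule k V, RepStable ρ W → W = ⊥ ∨ W = ⊤

/-- Isomorphism of representations of `G`. -/
def RepIso {G V W : Type} [Group G] [AddCommGroup V] [Module k V]
    [AddCommGroup W] [Module k W]
    (ρ : G →* (V →ₗ[k] V)ˣ) (τ : G →* (W →ₗ[k] W)ˣ) : Prop :=
  ∃ e : V ≃ₗ[k] W, ∀ (g : G) (v : V), e ((ρ g : V →ₗ[k] V) v) = (τ g : W →ₗ[k] W) (e v)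

variable {p : ℕ} {d : Fin p → ℕ}

/-- A representation of the Heisenberg-type group has weight `n` if `kˣ ⊆ G` acts through the
character `α ↦ αⁿ`. -/
def IsWeight (n : ℤ) {V : Type} [AddCommGroup V] [Module k V]
    (ρ : Heis k p d →* (V →ₗ[k] V)ˣ) : Prop :=
  ∀ (α : kˣ) (v : V), (ρ (Heis.mk α 1 1) : V →ₗ[k] V) v = ((α ^ n : kˣ) : k) • v

/-- `D n = (d₁⋯d_p)/(gcd(n,d₁)⋯gcd(n,d_p))`. -/
def ThetaD (p : ℕ) (d : Fin p → ℕ) (n : ℤ) : ℕ :=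
  (∏ i, d i) / ∏ i, Int.gcd n (d i)

end Reps


section Stmt7Proof

open Module

variable {k : Type} [Field k] {p : ℕ} {d : Fin p → ℕ}

/-- The product of the `dᵢ`. -/
private def DD (d : Fin p → ℕ) : ℕ := ∏ i, d i

private theorem theta1_pow_DD (x : ThetaK1 p d) : x ^ DD d = 1 := by
  funext i
  show x i ^ DD d = 1
  have h : ((DD d : ℕ) : ZMod (d i)) = 0 :=
    (CharP.cast_eq_zero_iff (ZMod (d i)) (d i) (DD d)).mpr
      (Finset.dvd_prod_of_mem d (Finset.mem_univ i))
  apply Multiplicative.toAdd.injective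
  simp [toAdd_pow, nsmul_eq_mul, h]

private theorem chi_val_pow_DD (χ : ThetaK2 k p d) (x : ThetaK1 p d) :
    χ x ^ DD d = 1 := by
  rw [← map_pow, theta1_pow_DD, map_one]

private theorem theta2_pow_DD (χ : ThetaK2 k p d) : χ ^ DD d = 1 := by
  refine MonoidHom.ext fun x => ?_
  exact (MonoidHom.pow_apply χ (DD d) x).trans (chi_val_pow_DD χ x)

private theorem theta2_one_mul (χ : ThetaK2 k p d) : (1 : ThetaK2 k p d) * χ = χ :=
  MonoidHom.ext fun y => by rw [MonoidHom.mul_apply, MonoidHom.one_apply, one_mul]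

/-- The finite subgroup of `Heis` consisting of elements whose scalar part is a root of unity. -/
private def HH (k : Type) [Field k] (p : ℕ) (d : Fin p → ℕ) : Subgroup (Heis k p d) where
  carrier := {a | a.1 ^ DD d = 1}
  one_mem' := one_pow _
  mul_mem' := by
    intro a b ha hb
    show (a.1 * b.1 * b.2.2 a.2.1) ^ DD d = 1
    rw [mul_pow, mul_pow, ha, hb, chi_val_pow_DD, one_mul, one_mul]
  inv_mem' := by
    intro a ha
    show (a.1⁻¹ * a.2.2 a.2.1) ^ DD d = 1
    rw [mul_pow, chi_val_pow_DD, inv_pow, ha, inv_one, one_mul]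

private theorem finite_theta2 (hd0 : ∀ i, 0 < d i) : Finite (ThetaK2 k p d) := by
  haveI : ∀ i, NeZero (d i) := fun i => ⟨(hd0 i).ne'⟩
  haveI : NeZero (DD d) := ⟨(Finset.prod_pos fun i _ => hd0 i).ne'⟩
  apply Finite.of_injective
    (fun (χ : ThetaK2 k p d) =>
      (fun x => (⟨χ x, (mem_rootsOfUnity _ _).mpr (chi_val_pow_DD χ x)⟩ :
        rootsOfUnity (DD d) k) : ThetaK1 p d → rootsOfUnity (DD d) k))
  intro χ ψ h
  refine MonoidHom.ext fun x => ?_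
  exact Subtype.ext_iff.mp (congrFun h x)

private theorem finite_HH (hd0 : ∀ i, 0 < d i) : Finite (HH k p d) := by
  haveI : ∀ i, NeZero (d i) := fun i => ⟨(hd0 i).ne'⟩
  haveI : NeZero (DD d) := ⟨(Finset.prod_pos fun i _ => hd0 i).ne'⟩
  haveI := finite_theta2 (k := k) hd0
  apply Finite.of_injective
    (fun (a : HH k p d) =>
      ((⟨(a : Heis k p d).1, (mem_rootsOfUnity _ _).mpr a.2⟩ : rootsOfUnity (DD d) k),
        (a : Heis k p d).2))
  intro a b h
  dsimp only at h
  apply Subtype.ext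
  have h1 := congrArg Prod.fst h
  have h2 := congrArg Prod.snd h
  exact Prod.ext (Subtype.ext_iff.mp h1) h2

private theorem eq_one_of_pow_coprime {M : Type*} [Monoid M] {a : M} {s t : ℕ}
    (hcop : Nat.Coprime s t) (hs : a ^ s = 1) (ht : a ^ t = 1) : a = 1 := by
  have h1 := orderOf_dvd_of_pow_eq_one hs
  have h2 := orderOf_dvd_of_pow_eq_one ht
  have h3 : orderOf a ∣ 1 := hcop ▸ Nat.dvd_gcd h1 h2
  exact orderOf_eq_one_iff.mp (Nat.dvd_one.mp h3)

/-- Projection of `Heis` onto the two theta components, as a monoid hom. -/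
private def projTheta : Heis k p d →* ThetaK1 p d × ThetaK2 k p d where
  toFun a := (a.2.1, a.2.2)
  map_one' := rfl
  map_mul' _ _ := rfl

/-- Embedding of `kˣ` into `Heis` as scalars, as a monoid hom. -/
private def scalarHom : kˣ →* Heis k p d where
  toFun α := Heis.mk α 1 1
  map_one' := rfl
  map_mul' α β := by
    show Heis.mk (α * β) 1 1 = _
    rw [Heis.mk_mul,
      show ((1 : ThetaK2 k p d) (1 : ThetaK1 p d)) = 1 from rfl, mul_one,
      show ((1 : ThetaK1 p d) * 1) = 1 from one_mul 1, theta2_one_mul]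

private theorem card_HH_ne_zero (hd0 : ∀ i, 0 < d i)
    (hchar : ∀ i, ¬ (ringChar k ∣ d i)) [Fintype (HH k p d)] :
    ((Fintype.card (HH k p d) : k) ≠ 0) := by
  intro h0
  haveI : CharP k (ringChar k) := ringChar.charP k
  have hdvd : ringChar k ∣ Fintype.card (HH k p d) :=
    (CharP.cast_eq_zero_iff k (ringChar k) _).mp h0
  rcases CharP.char_is_prime_or_zero k (ringChar k) with hq | hq
  · haveI : Fact (ringChar k).Prime := ⟨hq⟩
    obtain ⟨g, hg⟩ := exists_prime_orderOf_dvd_card (ringChar k) hdvd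
    set q := ringChar k with hqdef
    have hgq : (g : Heis k p d) ^ q = 1 := by
      have h := pow_orderOf_eq_one g
      rw [hg] at h
      have := congrArg ((HH k p d).subtype) h
      simpa using this
    have hqDD : ¬ q ∣ DD d := by
      intro hdd
      obtain ⟨i, _, hi⟩ := hq.prime.exists_mem_finset_dvd hdd
      exact hchar i hi
    have hcop : Nat.Coprime q (DD d) := (Nat.Prime.coprime_iff_not_dvd hq).mpr hqDD
    have hproj : ((g : Heis k p d).2.1, (g : Heis k p d).2.2) ^ q = 1 := by
      have := congrArg projTheta hgq
      rw [map_pow, map_one] at this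
      exact this
    have hx : (g : Heis k p d).2.1 = 1 :=
      eq_one_of_pow_coprime hcop (congrArg Prod.fst hproj) (theta1_pow_DD _)
    have hchi : (g : Heis k p d).2.2 = 1 :=
      eq_one_of_pow_coprime (M := ThetaK2 k p d) hcop (congrArg Prod.snd hproj) (theta2_pow_DD _)
    have heq : (g : Heis k p d) = scalarHom (g : Heis k p d).1 := by
      show _ = Heis.mk _ 1 1
      rw [← hx, ← hchi]
      rfl
    have hcq : (g : Heis k p d).1 ^ q = 1 := by
      have h5 : (scalarHom ((g : Heis k p d).1 ^ q) : Heis k p d) = 1 := by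
        rw [map_pow, ← heq, hgq]
      exact congrArg (fun z : Heis k p d => z.1) h5
    have hc1 : (g : Heis k p d).1 = 1 := eq_one_of_pow_coprime hcop hcq g.2
    have hgone : (g : Heis k p d) = 1 := by
      rw [heq, hc1, map_one]
    have : g = 1 := Subtype.ext hgone
    rw [this, orderOf_one] at hg
    exact hq.one_lt.ne hg
  · rw [hq] at hdvd
    exact Fintype.card_ne_zero (zero_dvd_iff.mp hdvd)

private theorem repStable_of_HH {n : ℤ} {V : Type} [AddCommGroup V] [Module k V]
    {ρ : Heis k p d →* (V →ₗ[k] V)ˣ} (hw : IsWeight n ρ) {W : Submodule k V}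
    (h : ∀ g ∈ HH k p d, ∀ w ∈ W, (ρ g : V →ₗ[k] V) w ∈ W) : RepStable ρ W := by
  intro g w hwW
  have hmem : Heis.mk 1 g.2.1 g.2.2 ∈ HH k p d := one_pow _
  have hg : g = Heis.mk g.1 1 1 * Heis.mk 1 g.2.1 g.2.2 := by
    rw [Heis.mk_mul,
      show (g.2.2 (1 : ThetaK1 p d)) = 1 from map_one g.2.2, mul_one, mul_one,
      show ((1 : ThetaK1 p d) * g.2.1) = g.2.1 from one_mul _, theta2_one_mul]
    rfl
  have : (ρ g : V →ₗ[k] V) w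
      = ((g.1 ^ n : kˣ) : k) • (ρ (Heis.mk 1 g.2.1 g.2.2) : V →ₗ[k] V) w := by
    conv_lhs => rw [hg]
    rw [map_mul, Units.val_mul, Module.End.mul_apply, hw]
  rw [this]
  exact Submodule.smul_mem _ _ (h _ hmem w hwW)

private theorem exists_stable_compl (hd0 : ∀ i, 0 < d i)
    (hchar : ∀ i, ¬ (ringChar k ∣ d i)) {n : ℤ} {V : Type} [AddCommGroup V] [Module k V]
    [FiniteDimensional k V] {ρ : Heis k p d →* (V →ₗ[k] V)ˣ} (hw : IsWeight n ρ)
    (W : Submodule k V) (hW : RepStable ρ W) :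
    ∃ W' : Submodule k V, RepStable ρ W' ∧ IsCompl W W' := by
  haveI := finite_HH (k := k) (d := d) hd0
  haveI : Fintype (HH k p d) := Fintype.ofFinite _
  classical
  obtain ⟨Wc, hWcc⟩ := Submodule.exists_isCompl W
  set prj : V →ₗ[k] V := W.subtype.comp (W.linearProjOfIsCompl Wc hWcc) with hprj
  have hprj_mem : ∀ v, prj v ∈ W := fun v => (W.linearProjOfIsCompl Wc hWcc v).2
  have hprj_id : ∀ w ∈ W, prj w = w := by
    intro w hw'
    have := Submodule.linearProjOfIsCompl_apply_left hWcc ⟨w, hw'⟩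
    exact congrArg Subtype.val this
  set u : HH k p d →* (V →ₗ[k] V) :=
    ((Units.coeHom _).comp ρ).comp (HH k p d).subtype with hu
  have hu_apply : ∀ (h : HH k p d) (v : V), u h v = (ρ (h : Heis k p d) : V →ₗ[k] V) v :=
    fun _ _ => rfl
  set T : HH k p d → (V →ₗ[k] V) := fun h => u h⁻¹ * prj * u h with hT
  set sT : V →ₗ[k] V := ∑ h : HH k p d, T h with hsT
  set c : k := (Fintype.card (HH k p d) : k) with hcdef
  have hc : c ≠ 0 := card_HH_ne_zero hd0 hchar
  set avg : V →ₗ[k] V := c⁻¹ • sT with havg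
  -- equivariance
  have hTg : ∀ h g : HH k p d, T h * u g = u g * T (h * g) := by
    intro h g
    have h1 : T h * u g = u h⁻¹ * (prj * u (h * g)) := by
      rw [hT]
      simp only [map_mul, mul_assoc]
    have h2 : u g * T (h * g) = u h⁻¹ * (prj * u (h * g)) := by
      rw [hT]
      have : u g * (u (h * g)⁻¹ * (prj * u (h * g)))
          = (u g * u (h * g)⁻¹) * (prj * u (h * g)) := by rw [mul_assoc]
      simp only [mul_assoc] at this ⊢
      rw [← mul_assoc (u g), ← map_mul]
      have hgg : g * (h * g)⁻¹ = h⁻¹ := by group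
      rw [hgg]
    rw [h1, h2]
  have hsTg : ∀ g : HH k p d, sT * u g = u g * sT := by
    intro g
    rw [hsT, Finset.sum_mul, Finset.mul_sum]
    calc ∑ h : HH k p d, T h * u g = ∑ h : HH k p d, u g * T (h * g) := by
          exact Finset.sum_congr rfl fun h _ => hTg h g
      _ = ∑ h : HH k p d, u g * T h :=
          Fintype.sum_equiv (Equiv.mulRight g) _ _ (fun h => rfl)
  have havgg : ∀ (g : HH k p d) (v : V), avg (u g v) = u g (avg v) := by
    intro g v
    have := congrArg (fun f => (f : V →ₗ[k] V) v) (hsTg g)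
    simp only [Module.End.mul_apply] at this
    rw [havg]
    simp only [LinearMap.smul_apply]
    rw [this, map_smul]
  -- avg maps into W
  have havg_mem : ∀ v, avg v ∈ W := by
    intro v
    rw [havg]
    refine Submodule.smul_mem _ _ ?_
    rw [hsT]
    rw [LinearMap.sum_apply]
    refine Submodule.sum_mem _ fun h _ => ?_
    rw [hT]
    simp only [Module.End.mul_apply]
    exact hW _ _ (hprj_mem _)
  -- avg is identity on W
  have havg_id : ∀ w ∈ W, avg w = w := by
    intro w hw'
    have hTw : ∀ h : HH k p d, T h w = w := by
      intro h
      rw [hT]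
      simp only [Module.End.mul_apply]
      have hm : u h w ∈ W := hW _ w hw'
      rw [hprj_id _ hm]
      have : u h⁻¹ (u h w) = (u h⁻¹ * u h) w := rfl
      rw [this, ← map_mul, inv_mul_cancel, map_one, Module.End.one_apply]
    rw [havg]
    simp only [LinearMap.smul_apply]
    rw [hsT, LinearMap.sum_apply]
    rw [Finset.sum_congr rfl (fun h _ => hTw h), Finset.sum_const, Finset.card_univ]
    rw [← Nat.cast_smul_eq_nsmul k, smul_smul, inv_mul_cancel₀ hc, one_smul]
  refine ⟨LinearMap.ker avg, ?_, ?_⟩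
  · refine repStable_of_HH hw ?_
    intro g hg w hwker
    have hker : avg w = 0 := hwker
    show (ρ g : V →ₗ[k] V) w ∈ LinearMap.ker avg
    rw [LinearMap.mem_ker]
    have := havgg ⟨g, hg⟩ w
    rw [hu_apply] at this
    rw [this, hker, map_zero]
  · have hcompl := LinearMap.isCompl_of_proj
      (f := LinearMap.codRestrict W avg havg_mem) ?_
    · rwa [LinearMap.ker_codRestrict] at hcompl
    · intro x
      apply Subtype.ext
      rw [LinearMap.codRestrict_apply]
      exact havg_id x x.2

private theorem decomp (hd0 : ∀ i, 0 < d i)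
    (hchar : ∀ i, ¬ (ringChar k ∣ d i)) {n : ℤ} {V : Type} [AddCommGroup V] [Module k V]
    [FiniteDimensional k V] {ρ : Heis k p d →* (V →ₗ[k] V)ˣ} (hw : IsWeight n ρ) :
    ∀ (m : ℕ) (W : Submodule k V), RepStable ρ W → Module.finrank k W ≤ m →
      ∃ (ι : Type) (_ : Fintype ι) (f : ι → Submodule k V),
        (∀ i, f i ≤ W ∧ RepStable ρ (f i) ∧ f i ≠ ⊥ ∧
          ∀ U : Submodule k V, U ≤ f i → RepStable ρ U → U = ⊥ ∨ U = f i) ∧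
        iSupIndep f ∧ iSup f = W := by
  intro m
  induction m with
  | zero =>
    intro W _ hr
    have hWbot : W = ⊥ := Submodule.finrank_eq_zero.mp (Nat.le_zero.mp hr)
    exact ⟨PEmpty, inferInstance, fun i => i.elim, fun i => i.elim,
      fun i => i.elim, by rw [iSup_of_empty]; exact hWbot.symm⟩
  | succ m ih =>
    intro W hWst hr
    by_cases hbot : W = ⊥
    · exact ⟨PEmpty, inferInstance, fun i => i.elim, fun i => i.elim,
        fun i => i.elim, by rw [iSup_of_empty]; exact hbot.symm⟩
    classical
    have hex : ∃ r : ℕ, ∃ U : Submodule k V,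
        (U ≤ W ∧ RepStable ρ U ∧ U ≠ ⊥) ∧ Module.finrank k U = r :=
      ⟨_, W, ⟨le_rfl, hWst, hbot⟩, rfl⟩
    obtain ⟨U, ⟨hUW, hUst, hUbot⟩, hUr⟩ := Nat.find_spec hex
    have hmin : ∀ U' : Submodule k V, U' ≤ W → RepStable ρ U' → U' ≠ ⊥ →
        ¬ Module.finrank k U' < Module.finrank k U := by
      intro U' h1 h2 h3 hlt
      exact Nat.find_min hex (hUr ▸ hlt) ⟨U', ⟨h1, h2, h3⟩, rfl⟩
    have hUirr : ∀ U' : Submodule k V, U' ≤ U → RepStable ρ U' → U' = ⊥ ∨ U' = U := by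
      intro U' hle hst
      rcases eq_or_ne U' ⊥ with h | h
      · exact Or.inl h
      right
      by_contra hne
      exact hmin U' (hle.trans hUW) hst h
        (Submodule.finrank_lt_finrank_of_lt (lt_of_le_of_ne hle hne))
    obtain ⟨Wc, hWcst, hWcc⟩ := exists_stable_compl hd0 hchar hw U hUst
    set C : Submodule k V := Wc ⊓ W with hC
    have hCst : RepStable ρ C := fun g w hw' => ⟨hWcst g w hw'.1, hWst g w hw'.2⟩
    have hCW : C ≤ W := inf_le_right
    have hUC_disj : U ⊓ C = ⊥ := by
      rw [eq_bot_iff]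
      intro x hx
      have : x ∈ U ⊓ Wc := ⟨hx.1, hx.2.1⟩
      rwa [hWcc.inf_eq_bot] at this
    have hUC_sup : U ⊔ C = W := by
      rw [hC, ← sup_inf_assoc_of_le _ hUW, hWcc.sup_eq_top, top_inf_eq]
    have hrC : Module.finrank k C ≤ m := by
      have h1 : Module.finrank k ↥(U ⊔ C) + Module.finrank k ↥(U ⊓ C)
          = Module.finrank k U + Module.finrank k C :=
        Submodule.finrank_sup_add_finrank_inf_eq U C
      rw [hUC_sup, hUC_disj, finrank_bot, add_zero] at h1
      have h2 : 0 < Module.finrank k U := by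
        rcases Nat.eq_zero_or_pos (Module.finrank k U) with h | h
        · exact absurd (Submodule.finrank_eq_zero.mp h) hUbot
        · exact h
      omega
    obtain ⟨ι, hι, f, hf, hind, hsup⟩ := ih C hCst hrC
    have hsub : ∀ i, f i ≤ C := fun i => (hf i).1
    have hdisjUC : Disjoint U C := disjoint_iff.mpr hUC_disj
    refine ⟨Option ι, inferInstance, fun o => o.elim U f, ?_, ?_, ?_⟩
    · rintro (_ | i)
      · exact ⟨hUW, hUst, hUbot, hUirr⟩
      · exact ⟨(hf i).1.trans hCW, (hf i).2.1, (hf i).2.2.1, (hf i).2.2.2⟩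
    · intro o
      match o with
      | none =>
        show Disjoint U _
        refine hdisjUC.mono_right ?_
        refine iSup_le fun j => iSup_le fun hj => ?_
        match j with
        | none => exact absurd rfl hj
        | some i => exact hsub i
      | some i =>
        show Disjoint (f i) _
        have h1 : (⨆ (j) (_ : j ≠ some i), (Option.elim j U f))
            ≤ (⨆ (j) (_ : j ≠ i), f j) ⊔ U := by
          refine iSup_le fun j => iSup_le fun hj => ?_
          match j with
          | none => exact le_sup_right
          | some j' =>
            have hj' : j' ≠ i := fun h => hj (by rw [h])
            exact le_trans (le_iSup₂ (f := fun (j : ι) (_ : j ≠ i) => f j) j' hj') le_sup_left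
        refine Disjoint.mono_right h1 ?_
        refine (hind i).disjoint_sup_right_of_disjoint_sup_left ?_
        refine hdisjUC.symm.mono_left ?_
        exact sup_le (hsub i) (iSup_le fun j => iSup_le fun _ => hsub j)
    · rw [iSup_option_elim, hsup, hUC_sup]

end Stmt7Proof

/-- Every weight-`n` module over the Heisenberg-type group `G` of type
`(d₁,…,d_p)` decomposes as a direct sum of irreducible weight-`n` `G`-modules (the irreducible
summands being `G`-stable subspaces with no proper nonzero `G`-stable subspace). -/
theorem stmt7 {k : Type} [Field k] [IsAlgClosed k] {p : ℕ} {d : Fin p → ℕ}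
    (hd0 : ∀ i, 0 < d i) (hchain : ∀ i j : Fin p, i ≤ j → d i ∣ d j)
    (hchar : ∀ i, ¬ (ringChar k ∣ d i))
    (n : ℤ) (V : Type) [AddCommGroup V] [Module k V] [FiniteDimensional k V]
    (ρ : Heis k p d →* (V →ₗ[k] V)ˣ)
    (hw : IsWeight n ρ) :
    ∃ (ι : Type) (_ : Fintype ι) (_ : DecidableEq ι) (W : ι → Submodule k V),
      DirectSum.IsInternal W ∧
      ∀ i, RepStable ρ (W i) ∧ W i ≠ ⊥ ∧
        ∀ U : Submodule k V, U ≤ W i → RepStable ρ U → U = ⊥ ∨ U = W i := by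
  classical
  have htop : RepStable ρ (⊤ : Submodule k V) := fun _ _ _ => Submodule.mem_top
  obtain ⟨ι, hι, f, hf, hind, hsup⟩ :=
    decomp hd0 hchar hw (Module.finrank k (⊤ : Submodule k V)) ⊤ htop le_rfl
  refine ⟨ι, hι, Classical.decEq ι, f, ?_, fun i =>
    ⟨(hf i).2.1, (hf i).2.2.1, fun U hU hUst => (hf i).2.2.2 U hU hUst⟩⟩
  exact (DirectSum.isInternal_submodule_iff_iSupIndep_and_iSup_eq_top f).mpr ⟨hind, hsup⟩
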